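/- Let S be a finite algebra, σ a strongly abelian congruence on S, B a σ-block, and suppose that for every pair b ≠ b' in B there exist a fixed element c ∈ S, a natural number k, a term t in 1 + k variables and parameters p̄ from a fixed finite set P ⊆ S^k such that t(b, p̄) = c iff t(b', p̄) ≠ c. For b ∈ B define G(b) = { (t, p̄) ∈ T × P : t(b, p̄) = c } where T is a finite set of terms containing all terms used above. Then the map b ↦ G(b) is injective; consequently |B| ≤ 2^{|T × P|}. -/
import Mathlib


/-- A purely functional first-order signature. -/
structure Signature where
  ops : Type
  arity : ops → ℕ

/-- An algebra for a signature: an interpretation of each operation symbol. -/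
structure UAlg (σ : Signature) (A : Type) where
  interp : ∀ o : σ.ops, (Fin (σ.arity o) → A) → A

/-- Terms in `n` variables over a signature. -/
inductive Term (σ : Signature) (n : ℕ) : Type
  | var : Fin n → Term σ n
  | op : (o : σ.ops) → (Fin (σ.arity o) → Term σ n) → Term σ n

/-- Evaluation of a term at a tuple. -/
def Term.eval {σ : Signature} {A : Type} (Alg : UAlg σ A) {n : ℕ} :
    Term σ n → (Fin n → A) → A
  | .var i, v => v i
  | .op o ts, v => Alg.interp o fun j => (ts j).eval Alg v

/-- A congruence: an equivalence relation compatible with all operations. -/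
def IsCongruence {σ : Signature} {A : Type} (Alg : UAlg σ A) (r : A → A → Prop) : Prop :=
  Equivalence r ∧ ∀ (o : σ.ops) (x y : Fin (σ.arity o) → A),
    (∀ i, r (x i) (y i)) → r (Alg.interp o x) (Alg.interp o y)

/-- A `k`-ary polynomial operation: a term operation with parameters. -/
def IsPolynomial {σ : Signature} {A : Type} (Alg : UAlg σ A) {k : ℕ}
    (f : (Fin k → A) → A) : Prop :=
  ∃ (n : ℕ) (t : Term σ (k + n)) (params : Fin n → A),
    ∀ x : Fin k → A, f x = t.eval Alg (Fin.append x params)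

/-- A unary polynomial operation. -/
def IsUnaryPolynomial {σ : Signature} {A : Type} (Alg : UAlg σ A) (f : A → A) : Prop :=
  IsPolynomial Alg (k := 1) fun x => f (x 0)

/-- The term condition TermCond(α, β; γ). -/
def TermCond {σ : Signature} {A : Type} (Alg : UAlg σ A) (α β γ : A → A → Prop) : Prop :=
  ∀ (n m : ℕ) (t : Term σ (n + m)) (a₁ a₂ : Fin n → A) (b₁ b₂ : Fin m → A),
    (∀ i, α (a₁ i) (a₂ i)) → (∀ i, β (b₁ i) (b₂ i)) →
    γ (t.eval Alg (Fin.append a₁ b₁)) (t.eval Alg (Fin.append a₁ b₂)) →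
    γ (t.eval Alg (Fin.append a₂ b₁)) (t.eval Alg (Fin.append a₂ b₂))

/-- β is strongly abelian over γ. -/
def StronglyAbelianOver {σ : Signature} {A : Type} (Alg : UAlg σ A)
    (β γ : A → A → Prop) : Prop :=
  ∀ (n m : ℕ) (t : Term σ (n + m)) (a₁ a₂ : Fin n → A) (b₁ b₂ b₃ : Fin m → A),
    (∀ i, β (a₁ i) (a₂ i)) → (∀ i, β (b₁ i) (b₂ i)) → (∀ i, β (b₂ i) (b₃ i)) →
    γ (t.eval Alg (Fin.append a₁ b₁)) (t.eval Alg (Fin.append a₂ b₂)) →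
    γ (t.eval Alg (Fin.append a₁ b₃)) (t.eval Alg (Fin.append a₂ b₃))

/-- The least congruence containing a binary relation. -/
def congClosure {σ : Signature} {A : Type} (Alg : UAlg σ A) (R : A → A → Prop) :
    A → A → Prop :=
  fun a b => ∀ r, IsCongruence Alg r → (∀ x y, R x y → r x y) → r a b

/-- A subset closed under the operations. -/
def IsSubalgebra {σ : Signature} {A : Type} (Alg : UAlg σ A) (s : Set A) : Prop :=
  ∀ (o : σ.ops) (x : Fin (σ.arity o) → A), (∀ j, x j ∈ s) → Alg.interp o x ∈ s

/-- The power algebra `A^I`. -/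
def UAlg.pow {σ : Signature} {A : Type} (Alg : UAlg σ A) (I : Type) :
    UAlg σ (I → A) :=
  ⟨fun o x i => Alg.interp o fun j => x j i⟩

/-- The product of a family of algebras. -/
def UAlg.pi {σ : Signature} {ι : Type} {A : ι → Type} (Alg : ∀ i, UAlg σ (A i)) :
    UAlg σ (∀ i, A i) :=
  ⟨fun o x i => (Alg i).interp o fun j => x j i⟩

/-- The binary product of two algebras. -/
def UAlg.prod2 {σ : Signature} {A B : Type} (AlgA : UAlg σ A) (AlgB : UAlg σ B) :
    UAlg σ (A × B) :=
  ⟨fun o x => (AlgA.interp o fun j => (x j).1, AlgB.interp o fun j => (x j).2)⟩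

/-- The algebra structure on a subalgebra. -/
def UAlg.sub {σ : Signature} {A : Type} (Alg : UAlg σ A) (s : Set A)
    (hs : IsSubalgebra Alg s) : UAlg σ s :=
  ⟨fun o x => ⟨Alg.interp o fun j => (x j : A), hs o _ fun j => (x j).2⟩⟩

/-- Homomorphisms of algebras. -/
def IsHom {σ : Signature} {A B : Type} (AlgA : UAlg σ A) (AlgB : UAlg σ B)
    (f : A → B) : Prop :=
  ∀ (o : σ.ops) (x : Fin (σ.arity o) → A), f (AlgA.interp o x) = AlgB.interp o (f ∘ x)

/-- An idempotent unary polynomial. -/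
def IsIdempotentPoly {σ : Signature} {A : Type} (Alg : UAlg σ A) (e : A → A) : Prop :=
  IsUnaryPolynomial Alg e ∧ ∀ x, e (e x) = e x

/-- A (⊥, δ)-minimal set. -/
def IsMinimalSet {σ : Signature} {A : Type} (Alg : UAlg σ A) (δ : A → A → Prop)
    (U : Set A) : Prop :=
  (∃ e, IsIdempotentPoly Alg e ∧ U = Set.range e ∧ ∃ a b, δ a b ∧ e a ≠ e b) ∧
  ∀ e', IsIdempotentPoly Alg e' → Set.range e' ⊆ U → (∃ a b, δ a b ∧ e' a ≠ e' b) →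
    Set.range e' = U

/-- μ is an atom of the congruence lattice. -/
def IsAtomCong {σ : Signature} {A : Type} (Alg : UAlg σ A) (μ : A → A → Prop) : Prop :=
  IsCongruence Alg μ ∧ μ ≠ (fun a b => a = b) ∧
  ∀ θ, IsCongruence Alg θ → (∀ a b, θ a b → μ a b) → θ = (fun a b => a = b) ∨ θ = μ

/-- A (⊥, μ)-trace in a minimal set U. -/
def IsTrace {A : Type} (μ : A → A → Prop) (U N : Set A) : Prop :=
  (∃ a ∈ U, N = {x ∈ U | μ x a}) ∧ ∃ x ∈ N, ∃ y ∈ N, x ≠ y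

/-- The body of a minimal set: the union of its traces. -/
def Body {A : Type} (μ : A → A → Prop) (U : Set A) : Set A :=
  {x | ∃ N, IsTrace μ U N ∧ x ∈ N}

/-- Polynomial permutations of U (as functions A → A which are bijective on U). -/
def PolPermFun {σ : Signature} {A : Type} (Alg : UAlg σ A) (U : Set A) : Set (A → A) :=
  { p | IsUnaryPolynomial Alg p ∧ Set.BijOn p U U }

/-- Subdirect irreducibility: there is a pair contained in every nontrivial congruence. -/
def IsSI {σ : Signature} {B : Type} (Alg : UAlg σ B) : Prop :=
  ∃ a b : B, a ≠ b ∧ ∀ θ, IsCongruence Alg θ → θ ≠ (fun x y => x = y) → θ a b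

/-- The subalgebra generated by a set. -/
def genSub {σ : Signature} {B : Type} (Alg : UAlg σ B) (s : Set B) : Set B :=
  ⋂₀ {t | IsSubalgebra Alg t ∧ s ⊆ t}

/-- A strongly solvable congruence: connected to ⊥ by strongly abelian covers. -/
def IsStronglySolvable {σ : Signature} {A : Type} (Alg : UAlg σ A)
    (s : A → A → Prop) : Prop :=
  ∃ (n : ℕ) (c : Fin (n + 1) → (A → A → Prop)),
    c 0 = (fun a b => a = b) ∧ c (Fin.last n) = s ∧
    (∀ i, IsCongruence Alg (c i)) ∧
    ∀ i : Fin n, (∀ a b, c i.castSucc a b → c i.succ a b) ∧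
      StronglyAbelianOver Alg (c i.succ) (c i.castSucc)

/-- The set of n-ary term operations of an algebra. -/
def TermFun {σ : Signature} {A : Type} (Alg : UAlg σ A) (n : ℕ) :
    Set ((Fin n → A) → A) :=
  { g | ∃ t : Term σ n, g = fun v => t.eval Alg v }

/-- For a strongly abelian congruence σ and a σ-block B separated by terms
with parameters from P at a fixed target value c, the map b ↦ G(b) is injective on B, so
|B| ≤ 2^{|T × P|}. -/
theorem stmt_11 {σs : Signature} {S : Type} [Fintype S] (Alg : UAlg σs S)
    (σ : S → S → Prop) (hσ : IsCongruence Alg σ)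
    (hSA : StronglyAbelianOver Alg σ (fun a b => a = b))
    (b₀ : S) (B : Set S) (hB : B = {x | σ x b₀})
    (c : S) (k : ℕ)
    (T : Set (Term σs (k + 1))) (hT : T.Finite)
    (P : Set (Fin k → S)) (hP : P.Finite)
    (hPσ : ∀ p ∈ P, ∀ q ∈ P, ∀ i, σ (p i) (q i))
    (hsep : ∀ b ∈ B, ∀ b' ∈ B, b ≠ b' →
      ∃ t ∈ T, ∃ p ∈ P,
        (t.eval Alg (Fin.cons b p) = c ↔ ¬ (t.eval Alg (Fin.cons b' p) = c))) :
    Set.InjOn (fun b => {tp : Term σs (k + 1) × (Fin k → S) |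
        tp.1 ∈ T ∧ tp.2 ∈ P ∧ tp.1.eval Alg (Fin.cons b tp.2) = c}) B ∧
    B.ncard ≤ 2 ^ (T ×ˢ P).ncard := by
  have hinj : Set.InjOn (fun b => {tp : Term σs (k + 1) × (Fin k → S) |
      tp.1 ∈ T ∧ tp.2 ∈ P ∧ tp.1.eval Alg (Fin.cons b tp.2) = c}) B := by
    intro b hb b' hb' heq
    by_contra hne
    obtain ⟨t, ht, p, hp, hiff⟩ := hsep b hb b' hb' hne
    have := Set.ext_iff.mp heq (t, p)
    simp only [Set.mem_setOf_eq] at this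
    tauto
  refine ⟨hinj, ?_⟩
  have hs : (T ×ˢ P).Finite := hT.prod hP
  haveI := hs.fintype
  classical
  set F : S → (↥(T ×ˢ P) → Bool) :=
    fun b tp => decide (tp.1.1.eval Alg (Fin.cons b tp.1.2) = c) with hF
  have hFinj : Set.InjOn F B := by
    intro b hb b' hb' heq
    apply hinj hb hb'
    ext ⟨t, p⟩
    simp only [Set.mem_setOf_eq]
    constructor
    · rintro ⟨ht, hp, he⟩
      refine ⟨ht, hp, ?_⟩
      have := congrFun heq ⟨(t, p), Set.mk_mem_prod ht hp⟩
      simp only [hF, decide_eq_decide] at this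
      exact this.mp he
    · rintro ⟨ht, hp, he⟩
      refine ⟨ht, hp, ?_⟩
      have := congrFun heq ⟨(t, p), Set.mk_mem_prod ht hp⟩
      simp only [hF, decide_eq_decide] at this
      exact this.mpr he
  have hBfin : B.Finite := Set.toFinite B
  calc B.ncard = (F '' B).ncard := (Set.ncard_image_of_injOn hFinj).symm
    _ ≤ (Set.univ : Set (↥(T ×ˢ P) → Bool)).ncard :=
        Set.ncard_le_ncard (Set.subset_univ _) Set.finite_univ
    _ = Fintype.card (↥(T ×ˢ P) → Bool) := by
        rw [Set.ncard_univ, Nat.card_eq_fintype_card]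
    _ = 2 ^ (T ×ˢ P).ncard := by
        rw [Fintype.card_fun, Fintype.card_bool,
          Set.ncard_eq_toFinset_card', Set.toFinset_card]
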